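/- Set ρ = B·e^{2b}. Let f : [−1,1] → ℝ be a broken solution with eigenvalue 0 satisfying f(−1) = 0 and f(1) = 1. Then f(0) = ρ/(1+ρ). -/

import Mathlib

/-- A "broken solution" with eigenvalue `lam` of the ODE `f'' + 2·b·f' = (log q)²·lam·f`
on `[-1,1]`: `f` is continuous on `[-1,1]`, twice continuously differentiable on
`[-1,0]` and on `[0,1]` (with one-sided derivatives at the endpoints), satisfies the
ODE on `(-1,0) ∪ (0,1)`, and its one-sided derivatives at `0` satisfy
`f'(0-) = B · f'(0+)`. -/
def IsBrokenSolution (q b B lam : ℝ) (f : ℝ → ℝ) : Prop :=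
  ContinuousOn f (Set.Icc (-1) 1) ∧
  ContDiffOn ℝ 2 f (Set.Icc (-1) 0) ∧
  ContDiffOn ℝ 2 f (Set.Icc 0 1) ∧
  (∀ x ∈ Set.Ioo (-1 : ℝ) 0 ∪ Set.Ioo (0 : ℝ) 1,
    deriv (deriv f) x + 2 * b * deriv f x = (Real.log q) ^ 2 * lam * f x) ∧
  derivWithin f (Set.Icc (-1) 0) 0 = B * derivWithin f (Set.Icc 0 1) 0

open Set

noncomputable def Eb (b x : ℝ) : ℝ := ∫ t in (0:ℝ)..x, Real.exp (-2*b*t)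

lemma expc (b : ℝ) : Continuous fun t : ℝ => Real.exp (-2*b*t) := by continuity

lemma Eb_hasDerivAt (b x : ℝ) : HasDerivAt (Eb b) (Real.exp (-2*b*x)) x :=
  intervalIntegral.integral_hasDerivAt_right ((expc b).intervalIntegrable _ _)
    ((expc b).stronglyMeasurableAtFilter _ _) (expc b).continuousAt

lemma const_of_deriv_zero {D : Set ℝ} (hD : Convex ℝ D) {φ : ℝ → ℝ}
    (hc : ContinuousOn φ D) (hd : ∀ x ∈ interior D, HasDerivAt φ 0 x) :
    ∀ x ∈ D, ∀ y ∈ D, φ x = φ y := by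
  have hdiff : DifferentiableOn ℝ φ (interior D) := fun x hx =>
    ((hd x hx).differentiableAt).differentiableWithinAt
  have hmono := monotoneOn_of_deriv_nonneg hD hc hdiff
    (fun x hx => le_of_eq ((hd x hx).deriv).symm)
  have hanti := antitoneOn_of_deriv_nonpos hD hc hdiff
    (fun x hx => le_of_eq ((hd x hx).deriv))
  intro x hx y hy
  rcases le_total x y with h | h
  · exact le_antisymm (hmono hx hy h) (hanti hx hy h)
  · exact (le_antisymm (hmono hy hx h) (hanti hy hx h)).symm

lemma aux (b u v : ℝ) (huv : u < v) (f : ℝ → ℝ)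
    (hf : ContDiffOn ℝ 2 f (Icc u v))
    (hode : ∀ x ∈ Ioo u v, deriv (deriv f) x + 2*b*deriv f x = 0) :
    ∃ C : ℝ, (∀ x ∈ Icc u v, f x = f u + C * (Eb b x - Eb b u)) ∧
      (∀ w ∈ Icc u v, derivWithin f (Icc u v) w = C * Real.exp (-2*b*w)) := by
  have hud : UniqueDiffOn ℝ (Icc u v) := uniqueDiffOn_Icc huv
  have hnh : ∀ x ∈ Ioo u v, Icc u v ∈ nhds x := fun x hx => Icc_mem_nhds hx.1 hx.2
  have hdf : ∀ x ∈ Ioo u v, DifferentiableAt ℝ f x := fun x hx =>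
    ((hf.differentiableOn (by norm_num)).differentiableAt (hnh x hx))
  set g := derivWithin f (Icc u v) with hg
  have hgC : ContDiffOn ℝ 1 g (Icc u v) := hf.derivWithin hud (by norm_num)
  have hgeq : ∀ x ∈ Ioo u v, g x = deriv f x := fun x hx =>
    derivWithin_of_mem_nhds (hnh x hx)
  have hdg : ∀ x ∈ Ioo u v, DifferentiableAt ℝ (deriv f) x := by
    intro x hx
    have h1 : DifferentiableAt ℝ g x :=
      (hgC.differentiableOn (by norm_num)).differentiableAt (hnh x hx)
    have hev : g =ᶠ[nhds x] deriv f :=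
      Filter.eventuallyEq_of_mem (Ioo_mem_nhds hx.1 hx.2) (fun y hy => hgeq y hy)
    exact hev.differentiableAt_iff.mp h1
  set φ : ℝ → ℝ := fun x => Real.exp (2*b*x) * deriv f x with hφdef
  have hφd : ∀ x ∈ interior (Ioo u v), HasDerivAt φ 0 x := by
    intro x hx
    rw [interior_Ioo] at hx
    have he : HasDerivAt (fun x : ℝ => Real.exp (2*b*x)) (Real.exp (2*b*x) * (2*b)) x := by
      simpa using ((hasDerivAt_id x).const_mul (2*b)).exp
    have hm := he.mul ((hdg x hx).hasDerivAt)
    have : Real.exp (2*b*x) * (2*b) * deriv f x + Real.exp (2*b*x) * deriv (deriv f) x = 0 := by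
      have h0 := hode x hx
      have : deriv (deriv f) x = -(2*b*deriv f x) := by linarith
      rw [this]; ring
    rwa [this] at hm
  have hφc : ContinuousOn φ (Ioo u v) := fun x hx => by
    have := (hφd x (by rwa [interior_Ioo])).differentiableAt.continuousAt
    exact this.continuousWithinAt
  have hφconst := const_of_deriv_zero (convex_Ioo u v) hφc hφd
  set m := (u+v)/2 with hm
  have hmI : m ∈ Ioo u v := ⟨by simp [hm]; linarith, by simp [hm]; linarith⟩
  set C := Real.exp (2*b*m) * deriv f m with hC
  have hderiv : ∀ x ∈ Ioo u v, deriv f x = C * Real.exp (-2*b*x) := by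
    intro x hx
    have h1 : φ x = C := hφconst x hx m hmI
    have h2 : Real.exp (2*b*x) * deriv f x = C := h1
    have h3 : Real.exp (-2*b*x) * Real.exp (2*b*x) = 1 := by
      rw [← Real.exp_add]; ring_nf; exact Real.exp_zero
    calc deriv f x = Real.exp (-2*b*x) * Real.exp (2*b*x) * deriv f x := by rw [h3]; ring
      _ = C * Real.exp (-2*b*x) := by rw [mul_assoc, h2]; ring
  -- h := f - C * Eb b is constant on Icc
  set h : ℝ → ℝ := fun x => f x - C * Eb b x with hhdef
  have hEbd : Differentiable ℝ (Eb b) := fun x => (Eb_hasDerivAt b x).differentiableAt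
  have hhc : ContinuousOn h (Icc u v) :=
    (hf.continuousOn).sub ((continuous_const.mul hEbd.continuous).continuousOn)
  have hhd : ∀ x ∈ interior (Icc u v), HasDerivAt h 0 x := by
    intro x hx
    rw [interior_Icc] at hx
    have h1 := (hdf x hx).hasDerivAt.sub ((Eb_hasDerivAt b x).const_mul C)
    have : deriv f x - C * Real.exp (-2*b*x) = 0 := by rw [hderiv x hx]; ring
    rwa [this] at h1
  have hhconst := const_of_deriv_zero (convex_Icc u v) hhc hhd
  have huI : u ∈ Icc u v := ⟨le_rfl, le_of_lt huv⟩
  have hEq : ∀ x ∈ Icc u v, f x = f u + C * (Eb b x - Eb b u) := by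
    intro x hx
    have := hhconst x hx u huI
    simp only [hhdef] at this
    linarith [this]
  refine ⟨C, hEq, ?_⟩
  intro w hw
  set F : ℝ → ℝ := fun x => f u + C * (Eb b x - Eb b u) with hF
  have heqon : EqOn f F (Icc u v) := fun x hx => hEq x hx
  have h1 : derivWithin f (Icc u v) w = derivWithin F (Icc u v) w :=
    derivWithin_congr heqon (heqon hw)
  have h2 : HasDerivAt F (C * Real.exp (-2*b*w)) w := by
    have := (((Eb_hasDerivAt b w).sub_const (Eb b u)).const_mul C).const_add (f u)
    exact this
  show derivWithin f (Icc u v) w = C * Real.exp (-2*b*w)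
  rw [h1, h2.hasDerivWithinAt.derivWithin (hud w hw)]



theorem brokenSolution_eigenvalue_zero_value_at_zero
    (q b B : ℝ) (hq : 1 < q) (hB : 0 < B) (f : ℝ → ℝ)
    (hf : IsBrokenSolution q b B 0 f) (hf1 : f (-1) = 0) (hf2 : f 1 = 1) :
    f 0 = B * Real.exp (2 * b) / (1 + B * Real.exp (2 * b)) := by
  obtain ⟨hcont, hL, hR, hode, hmatch⟩ := hf
  have hodeL : ∀ x ∈ Ioo (-1:ℝ) 0, deriv (deriv f) x + 2*b*deriv f x = 0 := by
    intro x hx; have := hode x (Or.inl hx); simpa using this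
  have hodeR : ∀ x ∈ Ioo (0:ℝ) 1, deriv (deriv f) x + 2*b*deriv f x = 0 := by
    intro x hx; have := hode x (Or.inr hx); simpa using this
  obtain ⟨C₁, hF₁, hD₁⟩ := aux b (-1) 0 (by norm_num) f hL hodeL
  obtain ⟨C₂, hF₂, hD₂⟩ := aux b 0 1 (by norm_num) f hR hodeR
  have h0L : (0:ℝ) ∈ Icc (-1:ℝ) 0 := by constructor <;> norm_num
  have h0R : (0:ℝ) ∈ Icc (0:ℝ) 1 := by constructor <;> norm_num
  have hC : C₁ = B * C₂ := by
    have e1 := hD₁ 0 h0L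
    have e2 := hD₂ 0 h0R
    rw [e1, e2] at hmatch
    simpa using hmatch
  have hEb0 : Eb b 0 = 0 := intervalIntegral.integral_same
  have hI12 : -Eb b (-1) = Real.exp (2*b) * Eb b 1 := by
    have h1 : -Eb b (-1) = ∫ t in (-1:ℝ)..0, Real.exp (-2*b*t) := by
      rw [Eb, ← intervalIntegral.integral_symm]
    have h2 : (∫ t in (0:ℝ)..1, Real.exp (-2*b*(t-1))) = ∫ t in (-1:ℝ)..0, Real.exp (-2*b*t) := by
      have := intervalIntegral.integral_comp_sub_right (fun t => Real.exp (-2*b*t)) 1 (a := 0) (b := 1)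
      simpa using this
    have h3 : (∫ t in (0:ℝ)..1, Real.exp (-2*b*(t-1)))
        = Real.exp (2*b) * ∫ t in (0:ℝ)..1, Real.exp (-2*b*t) := by
      rw [← intervalIntegral.integral_const_mul]
      congr 1; funext t
      rw [← Real.exp_add]; ring_nf
    rw [h1, ← h2, h3, Eb]
  have hI2pos : 0 < Eb b 1 := by
    rw [Eb]
    exact intervalIntegral.intervalIntegral_pos_of_pos ((expc b).intervalIntegrable _ _)
      (fun x => Real.exp_pos _) one_pos
  have hf0 : f 0 = C₁ * (-Eb b (-1)) := by
    have := hF₁ 0 h0L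
    rw [hf1, hEb0] at this; linarith
  have hf1' : (1:ℝ) = f 0 + C₂ * Eb b 1 := by
    have := hF₂ 1 (by constructor <;> norm_num)
    rw [hf2, hEb0] at this; linarith
  set ρ := B * Real.exp (2*b) with hρ
  have hρpos : 0 < ρ := mul_pos hB (Real.exp_pos _)
  have key : f 0 = ρ * (1 - f 0) := by
    have e1 : f 0 = ρ * (C₂ * Eb b 1) := by rw [hf0, hC, hI12]; ring
    have e2 : C₂ * Eb b 1 = 1 - f 0 := by linarith
    rw [e2] at e1; exact e1
  have h1ρ : (1 + ρ) ≠ 0 := by positivity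
  field_simp
  linarith [key]
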